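/- Let S and I be deterministic Moore automata over alphabet A with outputs in a set O (transition functions δ_S, δ_I, output functions f_S, f_I, initial states s₀, i₀). Suppose S is minimal (the map sending a state to its output language is injective), (c : C → A*, δ_C) is a weak state cover for I, and W ⊆ A* is a characterization set for S containing ε. If for every x ∈ C, u ∈ A^{≤1}, w ∈ W the outputs agree, i.e. f_S(δ_S*(s₀, c(x)·u·w)) = f_I(δ_I*(i₀, c(x)·u·w)), then S and I are equivalent: f_S(δ_S*(s₀, v)) = f_I(δ_I*(i₀, v)) for all v ∈ A*. -/
import Mathlib


/-- Main theorem instantiated to Moore machines: agreement on the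
test suite `c · A^{≤1} · W` built from a weak state cover `(c, δC)` of the
implementation and a characterization set `W` of the minimal specification
implies equivalence. -/
theorem stmt_5 {A O QS QI C : Type}
    (δS : QS → A → QS) (fS : QS → O) (s₀ : QS)
    (δI : QI → A → QI) (fI : QI → O) (i₀ : QI)
    (c : C → List A) (δC : C → A → C)
    -- S is minimal: the state-to-output-language map is injective
    (hmin : Function.Injective
      (fun q : QS => fun w : List A => fS (List.foldl δS q w)))
    -- (c, δC) is a weak state cover for I
    (hcε : ∃ x : C, c x = [])
    (hwsc : ∀ (x : C) (a : A),
      List.foldl δI i₀ (c (δC x a)) = List.foldl δI i₀ (c x ++ [a]))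
    -- W is a characterization set for S, containing ε
    (W : Set (List A)) (hWε : ([] : List A) ∈ W)
    (hW : ∀ p q : QS,
      (∀ w ∈ W, fS (List.foldl δS p w) = fS (List.foldl δS q w)) →
      ∀ v : List A, fS (List.foldl δS p v) = fS (List.foldl δS q v))
    -- agreement on the test suite
    (hagree : ∀ (x : C) (u : List A), u.length ≤ 1 → ∀ w ∈ W,
      fS (List.foldl δS s₀ (c x ++ u ++ w)) =
        fI (List.foldl δI i₀ (c x ++ u ++ w))) :
    ∀ v : List A,
      fS (List.foldl δS s₀ v) = fI (List.foldl δI i₀ v) := by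
  have key : ∀ v : List A, ∃ x : C,
      List.foldl δI i₀ (c x) = List.foldl δI i₀ v ∧
      ∀ w : List A,
        fS (List.foldl δS s₀ (v ++ w)) = fS (List.foldl δS s₀ (c x ++ w)) := by
    intro v
    induction v using List.reverseRecOn with
    | nil =>
      obtain ⟨x, hx⟩ := hcε
      exact ⟨x, by simp [hx], fun w => by simp [hx]⟩
    | append_singleton v a ih =>
      obtain ⟨x, hI, hS⟩ := ih
      refine ⟨δC x a, ?_, ?_⟩
      · rw [hwsc, List.foldl_append, List.foldl_append, hI]
      · have hstates : ∀ w : List A,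
            fS (List.foldl δS (List.foldl δS s₀ (c x ++ [a])) w) =
            fS (List.foldl δS (List.foldl δS s₀ (c (δC x a))) w) := by
          apply hW
          intro w hw
          rw [← List.foldl_append, ← List.foldl_append]
          have h1 := hagree x [a] (by simp) w hw
          have h2 := hagree (δC x a) [] (by simp) w hw
          simp only [List.append_nil] at h2
          rw [h1, h2]; simp only [List.foldl_append, hwsc]
        intro w
        have := hstates w
        rw [← List.foldl_append, ← List.foldl_append] at this
        calc fS (List.foldl δS s₀ (v ++ [a] ++ w))
            = fS (List.foldl δS s₀ (v ++ ([a] ++ w))) := by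
              rw [List.append_assoc]
          _ = fS (List.foldl δS s₀ (c x ++ ([a] ++ w))) := hS ([a] ++ w)
          _ = fS (List.foldl δS s₀ (c (δC x a) ++ w)) := by
              rw [← List.append_assoc]; exact this
  intro v
  obtain ⟨x, hI, hS⟩ := key v
  have h0 := hagree x [] (by simp) [] hWε
  simp only [List.append_nil] at h0
  have hv := hS []
  simp only [List.append_nil] at hv
  rw [hv, h0, hI]
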